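/- Let $A$ be an abelian group, $G,H,K$ groups, $U \le G \times H$, $V \le H \times K$, and $\phi : U \to A$, $\psi : V \to A$ homomorphisms such that $\phi_2$ and $\psi_1$ agree on $k_2(U) \cap k_1(V)$. Then the map $\phi * \psi : U * V \to A$ given by $(\phi*\psi)(g,k) = \phi(g,h)\psi(h,k)$, for any $h$ with $(g,h) \in U$ and $(h,k) \in V$, is a well-defined group homomorphism. -/
import Mathlib


def starSub {G H K : Type*} [Group G] [Group H] [Group K]
    (U : Subgroup (G × H)) (V : Subgroup (H × K)) : Subgroup (G × K) where
  carrier := {x | ∃ h : H, (x.1, h) ∈ U ∧ (h, x.2) ∈ V}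
  one_mem' := ⟨1, U.one_mem, V.one_mem⟩
  mul_mem' := by
    rintro x y ⟨h, hx1, hx2⟩ ⟨h', hy1, hy2⟩
    exact ⟨h * h', U.mul_mem hx1 hy1, V.mul_mem hx2 hy2⟩
  inv_mem' := by
    rintro x ⟨h, hx1, hx2⟩
    exact ⟨h⁻¹, U.inv_mem hx1, V.inv_mem hx2⟩

theorem starHom_welldef {G H K A : Type*} [Group G] [Group H] [Group K] [CommGroup A]
    (U : Subgroup (G × H)) (V : Subgroup (H × K)) (φ : U →* A) (ψ : V →* A)
    (hcomp : ∀ (h : H) (hU : ((1 : G), h) ∈ U) (hV : (h, (1 : K)) ∈ V),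
      (φ ⟨((1 : G), h), hU⟩)⁻¹ = ψ ⟨(h, (1 : K)), hV⟩)
    (g : G) (k : K) (h h' : H) (hU : (g, h) ∈ U) (hV : (h, k) ∈ V)
    (hU' : (g, h') ∈ U) (hV' : (h', k) ∈ V) :
    φ ⟨(g, h), hU⟩ * ψ ⟨(h, k), hV⟩ = φ ⟨(g, h'), hU'⟩ * ψ ⟨(h', k), hV'⟩ := by
  have hw1 : ((1 : G), h⁻¹ * h') ∈ U := by
    have := U.mul_mem (U.inv_mem hU) hU'
    simpa using this
  have hw2 : (h⁻¹ * h', (1 : K)) ∈ V := by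
    have := V.mul_mem (V.inv_mem hV) hV'
    simpa using this
  have e1 : φ ⟨(g, h'), hU'⟩ = φ ⟨(g, h), hU⟩ * φ ⟨((1 : G), h⁻¹ * h'), hw1⟩ := by
    rw [← map_mul]
    congr 1
    ext <;> simp
  have e2 : ψ ⟨(h', k), hV'⟩ = ψ ⟨(h, k), hV⟩ * ψ ⟨(h⁻¹ * h', (1 : K)), hw2⟩ := by
    rw [← map_mul]
    congr 1
    ext <;> simp
  rw [e1, e2, ← hcomp _ hw1 hw2]
  simp [mul_comm, mul_left_comm, mul_assoc]

/-- If `φ : U → A` and `ψ : V → A` satisfy `φ₂ = ψ₁` on `k2(U) ∩ k1(V)`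
(recall `φ₂(h) = φ(1,h)⁻¹` and `ψ₁(h) = ψ(h,1)`), then
`(φ * ψ)(g,k) = φ(g,h) ψ(h,k)` (for any `h` with `(g,h) ∈ U`, `(h,k) ∈ V`)
is a well-defined group homomorphism `U * V → A`. -/
theorem starHom_exists {G H K A : Type*} [Group G] [Group H] [Group K] [CommGroup A]
    (U : Subgroup (G × H)) (V : Subgroup (H × K)) (φ : U →* A) (ψ : V →* A)
    (hcomp : ∀ (h : H) (hU : ((1 : G), h) ∈ U) (hV : (h, (1 : K)) ∈ V),
      (φ ⟨((1 : G), h), hU⟩)⁻¹ = ψ ⟨(h, (1 : K)), hV⟩) :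
    ∃ χ : starSub U V →* A,
      ∀ (g : G) (k : K) (h : H) (hU : (g, h) ∈ U) (hV : (h, k) ∈ V)
        (hm : (g, k) ∈ starSub U V),
        χ ⟨(g, k), hm⟩ = φ ⟨(g, h), hU⟩ * ψ ⟨(h, k), hV⟩ := by
  classical
  have key := starHom_welldef U V φ ψ hcomp
  let f : starSub U V → A := fun x =>
    φ ⟨(x.1.1, x.2.choose), x.2.choose_spec.1⟩ * ψ ⟨(x.2.choose, x.1.2), x.2.choose_spec.2⟩
  have hf : ∀ (g : G) (k : K) (h : H) (hU : (g, h) ∈ U) (hV : (h, k) ∈ V)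
      (hm : (g, k) ∈ starSub U V),
      f ⟨(g, k), hm⟩ = φ ⟨(g, h), hU⟩ * ψ ⟨(h, k), hV⟩ := by
    intro g k h hU hV hm
    exact key g k _ h hm.choose_spec.1 hm.choose_spec.2 hU hV
  refine ⟨MonoidHom.mk' f ?_, fun g k h hU hV hm => hf g k h hU hV hm⟩
  rintro ⟨x, hx⟩ ⟨y, hy⟩
  obtain ⟨h, hU, hV⟩ := hx
  obtain ⟨h', hU', hV'⟩ := hy
  have hm : (x.1 * y.1, x.2 * y.2) ∈ starSub U V :=
    ⟨h * h', U.mul_mem hU hU', V.mul_mem hV hV'⟩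
  have e1 : f (⟨x, ⟨h, hU, hV⟩⟩ * ⟨y, ⟨h', hU', hV'⟩⟩) = f ⟨(x.1 * y.1, x.2 * y.2), hm⟩ := by
    congr 1
  rw [e1, hf (x.1*y.1) (x.2*y.2) (h*h') (U.mul_mem hU hU') (V.mul_mem hV hV') hm,
    hf x.1 x.2 h hU hV ⟨h, hU, hV⟩, hf y.1 y.2 h' hU' hV' ⟨h', hU', hV'⟩]
  have eU : (⟨(x.1 * y.1, h * h'), U.mul_mem hU hU'⟩ : U)
      = ⟨(x.1, h), hU⟩ * ⟨(y.1, h'), hU'⟩ := rfl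
  have eV : (⟨(h * h', x.2 * y.2), V.mul_mem hV hV'⟩ : V)
      = ⟨(h, x.2), hV⟩ * ⟨(h', y.2), hV'⟩ := rfl
  rw [eU, eV, map_mul, map_mul]
  exact mul_mul_mul_comm _ _ _ _
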